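/- (Distortion mismatch for greedy quantization.) Assume ∫ ‖x‖^r dP(x) < +∞, let s ∈ (r, d+r), let (a_n)_{n≥1} be an L^r-optimal greedy quantization sequence for P, and let ε ∈ (0,1/3). If the probability measure ν together with the Borel function g_ε : ℝ^d → [0,∞) satisfies the ball control condition relative to a₁, then for every n ≥ 3: e_s(a^{(n)},P) ≤ 2^{1/d} · (r/d)^{r/(d(d+r))} · V_d^{−1/d} · φ_r(ε)^{−1/d} · (∫ g_ε^{−s/(d+r−s)} dP)^{(d+r−s)/(s(d+r))} · (∫ g_ε^{−r/d} dP)^{1/(d+r)} · (n−2)^{−1/d}. -/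

import Mathlib

open MeasureTheory Metric
open scoped ENNReal NNReal

/-- The `L^s`-quantization error of a grid `Γ` with respect to the measure `P`:
`e_s(Γ,P) = (∫ d(x,Γ)^s dP(x))^(1/s)`. -/
noncomputable def qerr {E : Type*} [NormedAddCommGroup E] [MeasurableSpace E]
    (s : ℝ) (P : Measure E) (Γ : Set E) : ℝ :=
  (∫ x, infDist x Γ ^ s ∂P) ^ (1 / s)

/-- The first `n` points `a^{(n)} = {a 1, …, a n}` of a sequence `a`. -/
def aSet {E : Type*} (a : ℕ → E) (n : ℕ) : Set E := a '' Set.Icc 1 n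

/-- `(a_n)_{n ≥ 1}` is an `L^r`-optimal greedy quantization sequence for `P`. -/
def IsGreedy {E : Type*} [NormedAddCommGroup E] [MeasurableSpace E]
    (r : ℝ) (P : Measure E) (a : ℕ → E) : Prop :=
  ∀ (n : ℕ) (ξ : E), qerr r P (aSet a (n + 1)) ≤ qerr r P (insert ξ (aSet a n))

/-- The (topological) support of a measure. -/
def msupport {E : Type*} [TopologicalSpace E] [MeasurableSpace E]
    (P : MeasureTheory.Measure E) : Set E :=
  {x | ∀ U ∈ nhds x, 0 < P U}


lemma bern {x q : ℝ} (hx0 : 0 < x) (hx1 : x < 1) (hq : 0 < q) :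
    1 + q * x ≤ (1 - x) ^ (-q) := by
  have h1 : (0:ℝ) < 1 - x := by linarith
  have h2 : (0:ℝ) < 1 + q * x := by positivity
  have h3 : (0:ℝ) < (1 - x) ^ (-q) := Real.rpow_pos_of_pos h1 _
  rw [← Real.log_le_log_iff h2 h3, Real.log_rpow h1]
  have l1 : Real.log (1 + q * x) ≤ q * x := by
    have := Real.log_le_sub_one_of_pos h2; linarith
  have l2 : Real.log (1 - x) ≤ -x := by
    have := Real.log_le_sub_one_of_pos h1; linarith
  nlinarith

lemma rec_aux {q C : ℝ} (hq : 0 < q) (hC : 0 < C) (u : ℕ → ℝ)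
    (hnn : ∀ k, 0 ≤ u k) (hrec : ∀ k, 1 ≤ k → u (k+1) ≤ u k - C * u k ^ (1+q)) :
    ∀ m, 2 ≤ m → u m ^ q ≤ (q * C * ((m:ℝ) - 1))⁻¹ := by
  have key : ∀ m, 1 ≤ m → 0 < u m → q * C * ((m:ℝ) - 1) ≤ u m ^ (-q) := by
    intro m
    induction m with
    | zero => omega
    | succ m ih =>
      intro _ hpos
      rcases Nat.eq_or_lt_of_le (Nat.one_le_iff_ne_zero.mpr (by omega) : 1 ≤ m + 1) with h1 | h1
      · -- m + 1 = 1
        have : m = 0 := by omega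
        subst this
        have h0 : q * C * (((0:ℕ)+1:ℕ) - 1 : ℝ) = 0 := by push_cast; ring
        rw [h0]
        positivity
      · -- m ≥ 1
        have hm1 : 1 ≤ m := by omega
        have hb : u (m+1) ≤ u m - C * u m ^ (1+q) := hrec m hm1
        have hum : 0 < u m := by
          have : u (m+1) ≤ u m := by nlinarith [Real.rpow_nonneg (hnn m) (1+q), hC]
          linarith
        have ihm := ih hm1 hum
        set a := u m with ha
        set b := u (m+1) with hb'
        have hxa : a ^ (1+q) = a * a ^ q := by
          rw [Real.rpow_add hum, Real.rpow_one]
        set x := C * a ^ q with hx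
        have hx0 : 0 < x := by positivity
        have hab : b ≤ a * (1 - x) := by rw [hx]; nlinarith [hxa]
        have hx1 : x < 1 := by nlinarith
        have h1x : 0 < 1 - x := by linarith
        have step1 : (a * (1-x)) ^ (-q) ≤ b ^ (-q) :=
          Real.rpow_le_rpow_of_nonpos hpos hab (by linarith)
        have step2 : (a * (1-x)) ^ (-q) = a ^ (-q) * (1-x) ^ (-q) :=
          Real.mul_rpow (le_of_lt hum) (le_of_lt h1x) ▸ rfl
        have step3 : a ^ (-q) * (1 + q * x) ≤ a ^ (-q) * (1-x) ^ (-q) := by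
          have := bern hx0 hx1 hq
          have hanq : 0 < a ^ (-q) := Real.rpow_pos_of_pos hum _
          nlinarith
        have step4 : a ^ (-q) * (q * x) = q * C := by
          rw [hx]
          calc a ^ (-q) * (q * (C * a ^ q)) = q * C * (a ^ (-q) * a ^ q) := by ring
          _ = q * C := by rw [← Real.rpow_add hum]; norm_num
        have : a ^ (-q) + q * C ≤ b ^ (-q) := by
          calc a ^ (-q) + q * C = a ^ (-q) * (1 + q * x) := by rw [← step4]; ring
          _ ≤ a ^ (-q) * (1-x) ^ (-q) := step3
          _ = (a * (1-x)) ^ (-q) := step2.symm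
          _ ≤ b ^ (-q) := step1
        push_cast
        linarith
  intro m hm
  rcases eq_or_lt_of_le (hnn m) with h0 | h0
  · rw [← h0, Real.zero_rpow (ne_of_gt hq)]
    have h2m : (2:ℝ) ≤ (m:ℝ) := by exact_mod_cast hm
    have h1m : (0:ℝ) < (m:ℝ) - 1 := by linarith
    positivity
  · have := key m (by omega) h0
    have hpos : 0 < q * C * ((m:ℝ) - 1) := by
      have : (2:ℝ) ≤ (m:ℝ) := by exact_mod_cast hm
      have : (0:ℝ) < (m:ℝ) - 1 := by linarith
      positivity
    have hrw : u m ^ (-q) = (u m ^ q)⁻¹ := by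
      rw [Real.rpow_neg (le_of_lt h0)]
    rw [hrw] at this
    have h2 : 0 < u m ^ q := Real.rpow_pos_of_pos h0 _
    calc u m ^ q = ((u m ^ q)⁻¹)⁻¹ := by rw [inv_inv]
    _ ≤ (q * C * ((m:ℝ) - 1))⁻¹ := inv_anti₀ hpos this

lemma holder_aux {α : Type*} [MeasurableSpace α] (P : Measure α) (G D : α → ℝ≥0∞)
    (hG : Measurable G) (hD : Measurable D) (hGpos : ∀ᵐ y ∂P, G y ≠ 0)
    (hGtop : ∀ y, G y ≠ ⊤) {b c : ℝ} (hb : 0 < b) (hc : 0 < c) :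
    ∫⁻ y, D y ^ b ∂P ≤ (∫⁻ y, G y * D y ^ (b + c) ∂P) ^ (b / (b + c)) *
      (∫⁻ y, G y ^ (-(b / c)) ∂P) ^ (c / (b + c)) := by
  set p := (b + c) / b with hp
  set q := (b + c) / c with hq
  have hbc : 0 < b + c := by linarith
  have hpq : p.HolderConjugate q := by
    rw [Real.holderConjugate_iff]
    constructor
    · rw [hp]; rw [lt_div_iff₀ hb]; linarith
    · rw [hp, hq]; field_simp
  set f := fun y => G y ^ (b / (b + c)) * D y ^ b with hf
  set gg := fun y => G y ^ (-(b / (b + c))) with hgg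
  have hfm : Measurable f := (hG.pow_const _).mul (hD.pow_const _)
  have hggm : Measurable gg := hG.pow_const _
  have key := ENNReal.lintegral_mul_le_Lp_mul_Lq P hpq hfm.aemeasurable hggm.aemeasurable
  have e1 : ∫⁻ y, (f * gg) y ∂P = ∫⁻ y, D y ^ b ∂P := by
    apply lintegral_congr_ae
    filter_upwards [hGpos] with y hy
    simp only [hf, hgg, Pi.mul_apply]
    rw [mul_comm (G y ^ (b / (b+c))) (D y ^ b), mul_assoc,
      ← ENNReal.rpow_add _ _ hy (hGtop y)]
    simp
  have e2 : ∫⁻ y, f y ^ p ∂P = ∫⁻ y, G y * D y ^ (b + c) ∂P := by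
    apply lintegral_congr
    intro y
    rw [hf]
    rw [ENNReal.mul_rpow_of_nonneg _ _ (by positivity : (0:ℝ) ≤ p),
      ← ENNReal.rpow_mul, ← ENNReal.rpow_mul]
    congr 2
    · rw [hp]; field_simp; simp
    · rw [hp]; field_simp
  have e3 : ∫⁻ y, gg y ^ q ∂P = ∫⁻ y, G y ^ (-(b / c)) ∂P := by
    apply lintegral_congr
    intro y
    rw [hgg, ← ENNReal.rpow_mul]
    congr 1
    rw [hq]
    field_simp
  have e4 : 1 / p = b / (b + c) := by rw [hp]; field_simp
  have e5 : 1 / q = c / (b + c) := by rw [hq]; field_simp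
  rw [e1, e2, e3, e4, e5] at key
  exact key

lemma msupport_ae {E : Type*} [TopologicalSpace E] [MeasurableSpace E]
    [SecondCountableTopology E] (P : Measure E) : ∀ᵐ x ∂P, x ∈ msupport P := by
  rw [MeasureTheory.ae_iff]
  have : {x | ¬ x ∈ msupport P} = (msupport P)ᶜ := rfl
  rw [this]
  apply measure_null_of_locally_null
  intro x hx
  simp only [msupport, Set.mem_compl_iff, Set.mem_setOf_eq, not_forall] at hx
  obtain ⟨U, hU, hU0⟩ := hx
  exact ⟨U, nhdsWithin_le_nhds hU, by simpa using hU0⟩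

lemma infDist_insert' {E : Type*} [PseudoMetricSpace E] {Γ : Set E} (hne : Γ.Nonempty)
    (ξ y : E) : infDist y (insert ξ Γ) = min (dist y ξ) (infDist y Γ) := by
  rw [Set.insert_eq, Metric.infDist, EMetric.infEdist_union, EMetric.infEdist_singleton,
    ENNReal.toReal_min (edist_ne_top _ _) (Metric.infEdist_ne_top hne), dist_edist, Metric.infDist]

lemma key_step {E : Type*} [NormedAddCommGroup E] [SecondCountableTopology E]
    [MeasurableSpace E] [OpensMeasurableSpace E]
    (P ν : Measure E) [IsProbabilityMeasure P] [IsProbabilityMeasure ν]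
    (d : ℕ) {r φc ε cV : ℝ} (hr : 0 < r) (hφ0 : 0 ≤ φc) (hφ1 : φc + ε ^ r ≤ 1)
    (hε : 0 < ε) (hcV : 0 ≤ cV)
    {g : E → ℝ} (hgm : Measurable g) (hg0 : ∀ x, 0 ≤ g x)
    {Γ Γ' : Set E} (hne : Γ.Nonempty)
    (hctrl2 : ∀ᵐ y ∂P, ENNReal.ofReal (g y * cV * (ε * infDist y Γ) ^ d)
      ≤ ν (closedBall y (ε * infDist y Γ)))
    (hgr : ∀ ξ : E, ∫⁻ y, ENNReal.ofReal (infDist y Γ') ^ r ∂P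
      ≤ ∫⁻ y, ENNReal.ofReal (infDist y (insert ξ Γ)) ^ r ∂P) :
    ∫⁻ y, ENNReal.ofReal (infDist y Γ') ^ r ∂P
      + ENNReal.ofReal (cV * (φc * ε ^ d))
        * ∫⁻ y, ENNReal.ofReal (g y) * ENNReal.ofReal (infDist y Γ) ^ ((d : ℝ) + r) ∂P
      ≤ ∫⁻ y, ENNReal.ofReal (infDist y Γ) ^ r ∂P := by
  set δ : E → ℝ := fun y => infDist y Γ with hδdef
  have hδ0 : ∀ y, 0 ≤ δ y := fun y => infDist_nonneg
  have hδc : Continuous δ := continuous_infDist_pt Γ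
  set F : E → E → ℝ≥0∞ := fun ξ y => ENNReal.ofReal (min (dist y ξ) (δ y)) ^ r with hF
  set gain : E → ℝ≥0∞ :=
    fun y => ENNReal.ofReal (cV * (φc * ε ^ d))
      * (ENNReal.ofReal (g y) * ENNReal.ofReal (δ y) ^ ((d : ℝ) + r)) with hgain
  have hgainm : Measurable gain := by
    apply Measurable.const_mul
    exact (hgm.ennreal_ofReal.mul (hδc.measurable.ennreal_ofReal.pow_const _))
  -- step 1
  have step1 : ∀ ξ : E, ∫⁻ y, ENNReal.ofReal (infDist y Γ') ^ r ∂P ≤ ∫⁻ y, F ξ y ∂P := by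
    intro ξ
    refine (hgr ξ).trans (le_of_eq ?_)
    apply lintegral_congr
    intro y
    rw [hF]
    simp only
    rw [infDist_insert' hne]
  -- step 2 and 3
  have step2 : ∫⁻ y, ENNReal.ofReal (infDist y Γ') ^ r ∂P ≤ ∫⁻ y, ∫⁻ ξ, F ξ y ∂ν ∂P := by
    have swap : ∫⁻ ξ, ∫⁻ y, F ξ y ∂P ∂ν = ∫⁻ y, ∫⁻ ξ, F ξ y ∂ν ∂P := by
      apply lintegral_lintegral_swap
      apply Measurable.aemeasurable
      have hc : Continuous fun p : E × E => min (dist p.2 p.1) (δ p.2) :=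
        ((continuous_dist.comp (continuous_snd.prodMk continuous_fst)).min
          (hδc.comp continuous_snd))
      exact (ENNReal.measurable_ofReal.comp hc.measurable).pow_const _
    rw [← swap]
    calc ∫⁻ y, ENNReal.ofReal (infDist y Γ') ^ r ∂P
        = ∫⁻ _, (∫⁻ y, ENNReal.ofReal (infDist y Γ') ^ r ∂P) ∂ν := by
          rw [lintegral_const, measure_univ, mul_one]
      _ ≤ ∫⁻ ξ, ∫⁻ y, F ξ y ∂P ∂ν := lintegral_mono fun ξ => step1 ξ
  -- step 4 : pointwise in y, a.e.
  have step4 : ∀ᵐ y ∂P, ∫⁻ ξ, F ξ y ∂ν + gain y ≤ ENNReal.ofReal (δ y) ^ r := by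
    filter_upwards [hctrl2] with y hy
    set t := ε * δ y with ht
    have ht0 : 0 ≤ t := mul_nonneg hε.le (hδ0 y)
    -- pointwise in ξ
    have pw : ∀ ξ, F ξ y + (closedBall y t).indicator
        (fun _ => ENNReal.ofReal (φc * δ y ^ r)) ξ ≤ ENNReal.ofReal (δ y) ^ r := by
      intro ξ
      by_cases hmem : ξ ∈ closedBall y t
      · rw [Set.indicator_of_mem hmem]
        have hd1 : dist ξ y ≤ t := mem_closedBall.mp hmem
        have hmin : min (dist y ξ) (δ y) ≤ t := by
          rw [dist_comm]
          exact le_trans (min_le_left _ _) hd1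
        have h1 : F ξ y ≤ ENNReal.ofReal (t ^ r) := by
          rw [hF]
          simp only
          rw [ENNReal.ofReal_rpow_of_nonneg (le_min dist_nonneg (hδ0 y)) hr.le]
          exact ENNReal.ofReal_le_ofReal
            (Real.rpow_le_rpow (le_min dist_nonneg (hδ0 y)) hmin hr.le)
        calc F ξ y + ENNReal.ofReal (φc * δ y ^ r)
            ≤ ENNReal.ofReal (t ^ r) + ENNReal.ofReal (φc * δ y ^ r) := by gcongr
          _ = ENNReal.ofReal (t ^ r + φc * δ y ^ r) := by
              rw [ENNReal.ofReal_add (Real.rpow_nonneg ht0 r)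
                (mul_nonneg hφ0 (Real.rpow_nonneg (hδ0 y) r))]
          _ ≤ ENNReal.ofReal (δ y ^ r) := by
              apply ENNReal.ofReal_le_ofReal
              rw [ht, Real.mul_rpow hε.le (hδ0 y)]
              nlinarith [Real.rpow_nonneg (hδ0 y) r, Real.rpow_nonneg hε.le r]
          _ = ENNReal.ofReal (δ y) ^ r :=
              (ENNReal.ofReal_rpow_of_nonneg (hδ0 y) hr.le).symm
      · rw [Set.indicator_of_notMem hmem, add_zero, hF]
        simp only
        rw [ENNReal.ofReal_rpow_of_nonneg (le_min dist_nonneg (hδ0 y)) hr.le,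
          ENNReal.ofReal_rpow_of_nonneg (hδ0 y) hr.le]
        exact ENNReal.ofReal_le_ofReal
          (Real.rpow_le_rpow (le_min dist_nonneg (hδ0 y)) (min_le_right _ _) hr.le)
    have int_pw : ∫⁻ ξ, F ξ y ∂ν + ENNReal.ofReal (φc * δ y ^ r) * ν (closedBall y t)
        ≤ ENNReal.ofReal (δ y) ^ r := by
      have := lintegral_mono pw (μ := ν)
      rwa [lintegral_add_right _ (measurable_const.indicator measurableSet_closedBall),
        lintegral_indicator_const measurableSet_closedBall, lintegral_const, measure_univ,
        mul_one] at this
    refine le_trans (add_le_add_right ?_ _) int_pw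
    -- gain y ≤ ofReal(φc δ^r) * ν(ball)
    calc gain y = ENNReal.ofReal (φc * δ y ^ r) * ENNReal.ofReal (g y * cV * t ^ d) := by
          rw [hgain]
          simp only
          rw [ENNReal.ofReal_rpow_of_nonneg (hδ0 y) (by positivity : (0:ℝ) ≤ (d:ℝ) + r),
            ← ENNReal.ofReal_mul (hg0 y),
            ← ENNReal.ofReal_mul (by positivity : (0:ℝ) ≤ cV * (φc * ε ^ d)),
            ← ENNReal.ofReal_mul (mul_nonneg hφ0 (Real.rpow_nonneg (hδ0 y) r))]
          congr 1
          rw [ht, mul_pow, Real.rpow_add' (hδ0 y) (by positivity), Real.rpow_natCast]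
          ring
      _ ≤ ENNReal.ofReal (φc * δ y ^ r) * ν (closedBall y t) := by gcongr
  -- step 5 : integrate over y
  calc ∫⁻ y, ENNReal.ofReal (infDist y Γ') ^ r ∂P
        + ENNReal.ofReal (cV * (φc * ε ^ d))
          * ∫⁻ y, ENNReal.ofReal (g y) * ENNReal.ofReal (infDist y Γ) ^ ((d : ℝ) + r) ∂P
      ≤ (∫⁻ y, ∫⁻ ξ, F ξ y ∂ν ∂P) + ∫⁻ y, gain y ∂P := by
        refine add_le_add step2 (le_of_eq ?_)
        have := lintegral_const_mul (μ := P) (ENNReal.ofReal (cV * (φc * ε ^ d)))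
          (hgm.ennreal_ofReal.mul (hδc.measurable.ennreal_ofReal.pow_const ((d:ℝ) + r)))
        rw [hgain]
        exact this.symm
    _ = ∫⁻ y, (∫⁻ ξ, F ξ y ∂ν) + gain y ∂P :=
        (lintegral_add_right _ hgainm).symm
    _ ≤ ∫⁻ y, ENNReal.ofReal (δ y) ^ r ∂P := lintegral_mono_ae step4

lemma ofReal_integral_le' {α : Type*} [MeasurableSpace α] (μ : Measure α) (f : α → ℝ)
    (hf : 0 ≤ f) : ENNReal.ofReal (∫ x, f x ∂μ) ≤ ∫⁻ x, ENNReal.ofReal (f x) ∂μ := by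
  by_cases hi : Integrable f μ
  · rw [integral_eq_lintegral_of_nonneg_ae (ae_of_all _ hf) hi.aestronglyMeasurable]
    exact ENNReal.ofReal_toReal_le
  · rw [integral_undef hi]; simp

lemma rpow_add_le' {r : ℝ} (hr : 0 ≤ r) (x y : ℝ≥0∞) :
    (x + y) ^ r ≤ (2:ℝ≥0∞) ^ r * (x ^ r + y ^ r) := by
  calc (x + y) ^ r ≤ (2 * max x y) ^ r := by
        apply ENNReal.rpow_le_rpow _ hr
        rw [two_mul]
        exact add_le_add (le_max_left _ _) (le_max_right _ _)
    _ = 2 ^ r * (max x y) ^ r := ENNReal.mul_rpow_of_nonneg _ _ hr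
    _ ≤ 2 ^ r * (x ^ r + y ^ r) := by
        gcongr
        rcases max_cases x y with ⟨h, _⟩ | ⟨h, _⟩ <;> rw [h]
        · exact le_add_right (le_refl _)
        · exact le_add_left (le_refl _)

lemma mom_fin {E : Type*} [NormedAddCommGroup E] [MeasurableSpace E] [OpensMeasurableSpace E]
    (P : Measure E) [IsProbabilityMeasure P] {r : ℝ} (hr : 0 < r)
    (hmom : (∫⁻ x, (‖x‖₊ : ℝ≥0∞) ^ r ∂P) < ⊤) (c : E) :
    ∫⁻ y, ENNReal.ofReal (dist y c) ^ r ∂P < ⊤ := by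
  have pw : ∀ y : E, ENNReal.ofReal (dist y c) ^ r
      ≤ (2:ℝ≥0∞) ^ r * ((‖y‖₊ : ℝ≥0∞) ^ r + (‖c‖₊ : ℝ≥0∞) ^ r) := by
    intro y
    refine le_trans ?_ (rpow_add_le' hr.le _ _)
    apply ENNReal.rpow_le_rpow _ hr.le
    calc ENNReal.ofReal (dist y c) ≤ ENNReal.ofReal (‖y‖ + ‖c‖) :=
          ENNReal.ofReal_le_ofReal (dist_le_norm_add_norm y c)
      _ = (‖y‖₊ : ℝ≥0∞) + (‖c‖₊ : ℝ≥0∞) := by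
          rw [ENNReal.ofReal_add (norm_nonneg _) (norm_nonneg _),
            ofReal_norm, ofReal_norm, enorm_eq_nnnorm, enorm_eq_nnnorm]
  calc ∫⁻ y, ENNReal.ofReal (dist y c) ^ r ∂P
      ≤ ∫⁻ y, (2:ℝ≥0∞) ^ r * ((‖y‖₊ : ℝ≥0∞) ^ r + (‖c‖₊ : ℝ≥0∞) ^ r) ∂P := lintegral_mono pw
    _ = (2:ℝ≥0∞) ^ r * ((∫⁻ y, (‖y‖₊ : ℝ≥0∞) ^ r ∂P) + (‖c‖₊ : ℝ≥0∞) ^ r) := by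
        rw [lintegral_const_mul _ (show Measurable fun y : E => (‖y‖₊ : ℝ≥0∞) ^ r + (‖c‖₊ : ℝ≥0∞) ^ r from (measurable_nnnorm.coe_nnreal_ennreal).pow_const _ |>.add
          measurable_const),
          lintegral_add_right _ measurable_const, lintegral_const, measure_univ, mul_one]
    _ < ⊤ := by
        apply ENNReal.mul_lt_top
        · exact ENNReal.rpow_lt_top_of_nonneg hr.le (by norm_num)
        · exact ENNReal.add_lt_top.mpr ⟨hmom,
            ENNReal.rpow_lt_top_of_nonneg hr.le ENNReal.coe_ne_top⟩

lemma infDist_lint_le {E : Type*} [NormedAddCommGroup E] [MeasurableSpace E]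
    [OpensMeasurableSpace E] (P : Measure E) {r : ℝ} (hr : 0 < r)
    {S : Set E} {c : E} (hc : c ∈ S) :
    ∫⁻ y, ENNReal.ofReal (infDist y S) ^ r ∂P ≤ ∫⁻ y, ENNReal.ofReal (dist y c) ^ r ∂P := by
  apply lintegral_mono
  intro y
  exact ENNReal.rpow_le_rpow (ENNReal.ofReal_le_ofReal (infDist_le_dist_of_mem hc)) hr.le

lemma integrable_infDist_rpow {E : Type*} [NormedAddCommGroup E] [MeasurableSpace E]
    [OpensMeasurableSpace E] (P : Measure E) [IsProbabilityMeasure P] {r : ℝ} (hr : 0 < r)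
    (hmom : (∫⁻ x, (‖x‖₊ : ℝ≥0∞) ^ r ∂P) < ⊤) {S : Set E} {c : E} (hc : c ∈ S) :
    Integrable (fun y => infDist y S ^ r) P := by
  constructor
  · exact ((continuous_infDist_pt S).rpow_const (fun x => Or.inr hr.le)).aestronglyMeasurable
  · rw [hasFiniteIntegral_iff_norm]
    calc ∫⁻ y, ENNReal.ofReal ‖infDist y S ^ r‖ ∂P
        = ∫⁻ y, ENNReal.ofReal (infDist y S) ^ r ∂P := by
          apply lintegral_congr; intro y
          rw [Real.norm_of_nonneg (Real.rpow_nonneg infDist_nonneg r),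
            ENNReal.ofReal_rpow_of_nonneg infDist_nonneg hr.le]
      _ ≤ ∫⁻ y, ENNReal.ofReal (dist y c) ^ r ∂P := infDist_lint_le P hr hc
      _ < ⊤ := mom_fin P hr hmom c

-- conversion of greedy inequality
lemma qerr_to_lintegral {E : Type*} [NormedAddCommGroup E] [MeasurableSpace E]
    [OpensMeasurableSpace E] (P : Measure E) [IsProbabilityMeasure P] {r : ℝ} (hr : 0 < r)
    (hmom : (∫⁻ x, (‖x‖₊ : ℝ≥0∞) ^ r ∂P) < ⊤) {S1 S2 : Set E} {c1 c2 : E}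
    (hc1 : c1 ∈ S1) (hc2 : c2 ∈ S2)
    (h : (∫ x, infDist x S1 ^ r ∂P) ^ (1/r) ≤ (∫ x, infDist x S2 ^ r ∂P) ^ (1/r)) :
    ∫⁻ y, ENNReal.ofReal (infDist y S1) ^ r ∂P ≤ ∫⁻ y, ENNReal.ofReal (infDist y S2) ^ r ∂P := by
  have conv : ∀ (S : Set E), (∫ x, infDist x S ^ r ∂P)
      = (∫⁻ y, ENNReal.ofReal (infDist y S) ^ r ∂P).toReal := by
    intro S
    rw [integral_eq_lintegral_of_nonneg_ae (ae_of_all _ (fun y => Real.rpow_nonneg infDist_nonneg r))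
      ((continuous_infDist_pt S).rpow_const (fun x => Or.inr hr.le)).aestronglyMeasurable]
    congr 1
    apply lintegral_congr; intro y
    rw [ENNReal.ofReal_rpow_of_nonneg infDist_nonneg hr.le]
  have hX : 0 ≤ ∫ x, infDist x S1 ^ r ∂P :=
    integral_nonneg (fun y => Real.rpow_nonneg infDist_nonneg r)
  have hY : 0 ≤ ∫ x, infDist x S2 ^ r ∂P :=
    integral_nonneg (fun y => Real.rpow_nonneg infDist_nonneg r)
  have hXY : (∫ x, infDist x S1 ^ r ∂P) ≤ ∫ x, infDist x S2 ^ r ∂P := by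
    have h2 := Real.rpow_le_rpow (Real.rpow_nonneg hX _) h hr.le
    rwa [← Real.rpow_mul hX, ← Real.rpow_mul hY, one_div,
      inv_mul_cancel₀ hr.ne', Real.rpow_one, Real.rpow_one] at h2
  rw [conv, conv] at hXY
  have fin1 : ∫⁻ y, ENNReal.ofReal (infDist y S1) ^ r ∂P ≠ ⊤ :=
    ((infDist_lint_le P hr hc1).trans_lt (mom_fin P hr hmom c1)).ne
  have fin2 : ∫⁻ y, ENNReal.ofReal (infDist y S2) ^ r ∂P ≠ ⊤ :=
    ((infDist_lint_le P hr hc2).trans_lt (mom_fin P hr hmom c2)).ne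
  exact (ENNReal.toReal_le_toReal fin1 fin2).mp hXY

lemma prod4_top (a b c e : ℝ≥0∞) (h : b = ⊤ ∨ c = ⊤) (ha : a ≠ 0) (hb : b ≠ 0) (hc : c ≠ 0)
    (he : e ≠ 0) : a * b * c * e = ⊤ := by
  rcases h with h | h
  · rw [h, ENNReal.mul_top ha, ENNReal.top_mul hc, ENNReal.top_mul he]
  · rw [h, ENNReal.mul_top (mul_ne_zero ha hb), ENNReal.top_mul he]

set_option maxHeartbeats 2000000 in
/-- Distortion mismatch for greedy quantization (Theorem 3.1): under the ball control
condition `ν(B(x,t)) ≥ g(x)·V_d·t^d` (for `x ∈ supp P`, `0 ≤ t ≤ ε‖x−a₁‖`), for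
`s ∈ (r, d+r)` and `n ≥ 3`,
`e_s(a^{(n)},P) ≤ 2^{1/d} (r/d)^{r/(d(d+r))} V_d^{−1/d} φ_r(ε)^{−1/d}
  (∫ g^{−s/(d+r−s)} dP)^{(d+r−s)/(s(d+r))} (∫ g^{−r/d} dP)^{1/(d+r)} (n−2)^{−1/d}`,
the `g`-integrals being taken in `[0,∞]`, `φ_r(u) = (3^{−r} − u^r) u^d`, `V_d = μ(B(0,1))`
for a Haar (Lebesgue) measure `μ`. -/
theorem stmt_10 {E : Type*} [NormedAddCommGroup E] [NormedSpace ℝ E]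
    [FiniteDimensional ℝ E] [MeasurableSpace E] [BorelSpace E]
    (d : ℕ) (hd : 1 ≤ d) (hdim : Module.finrank ℝ E = d)
    (μ : Measure E) [μ.IsAddHaarMeasure]
    (r : ℝ) (hr : 0 < r)
    (s : ℝ) (hs : s ∈ Set.Ioo r ((d : ℝ) + r))
    (P : Measure E) [IsProbabilityMeasure P]
    (hmom : (∫⁻ x, (‖x‖₊ : ℝ≥0∞) ^ r ∂P) < ⊤)
    (a : ℕ → E) (ha : IsGreedy r P a)
    (ε : ℝ) (hε : ε ∈ Set.Ioo (0 : ℝ) (1 / 3))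
    (ν : Measure E) [IsProbabilityMeasure ν]
    (g : E → ℝ) (hgm : Measurable g) (hg0 : ∀ x, 0 ≤ g x)
    (hctrl : ∀ x ∈ msupport P, ∀ t ∈ Set.Icc (0 : ℝ) (ε * ‖x - a 1‖),
      ENNReal.ofReal (g x * (μ (closedBall 0 1)).toReal * t ^ d) ≤ ν (closedBall x t))
    (n : ℕ) (hn : 3 ≤ n) :
    ENNReal.ofReal (qerr s P (aSet a n)) ≤
      ENNReal.ofReal ((2 : ℝ) ^ (1 / (d : ℝ))
          * (r / (d : ℝ)) ^ (r / ((d : ℝ) * ((d : ℝ) + r)))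
          * (μ (closedBall 0 1)).toReal ^ (-(1 / (d : ℝ)))
          * (((3 : ℝ) ^ (-r) - ε ^ r) * ε ^ d) ^ (-(1 / (d : ℝ))))
        * (∫⁻ x, ENNReal.ofReal (g x) ^ (-(s / ((d : ℝ) + r - s))) ∂P)
            ^ (((d : ℝ) + r - s) / (s * ((d : ℝ) + r)))
        * (∫⁻ x, ENNReal.ofReal (g x) ^ (-(r / (d : ℝ))) ∂P) ^ (1 / ((d : ℝ) + r))
        * ENNReal.ofReal (((n : ℝ) - 2) ^ (-(1 / (d : ℝ)))) := by
  classical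
  obtain ⟨hrs, hsd⟩ := hs
  obtain ⟨hε0, hε3⟩ := hε
  have hd0 : (0:ℝ) < (d:ℝ) := by exact_mod_cast hd
  have hs0 : 0 < s := hr.trans hrs
  have hds : 0 < (d:ℝ) + r - s := by linarith
  have hdr : 0 < (d:ℝ) + r := by linarith
  set Vd := (μ (closedBall 0 1)).toReal with hVdDef
  have hVd : 0 < Vd := by
    apply ENNReal.toReal_pos
    · exact (lt_of_lt_of_le (measure_ball_pos μ 0 one_pos)
        (measure_mono ball_subset_closedBall)).ne'
    · exact ((isCompact_closedBall 0 1).measure_lt_top).ne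
  set φc := (3:ℝ) ^ (-r) - ε ^ r with hφcDef
  have hφc : 0 < φc := by
    have h1 : ε ^ r < (1/3:ℝ) ^ r := Real.rpow_lt_rpow hε0.le hε3 hr
    have h2 : ((1:ℝ)/3) ^ r = (3:ℝ) ^ (-r) := by
      rw [Real.rpow_neg (by norm_num : (0:ℝ) ≤ 3), ← Real.inv_rpow (by norm_num : (0:ℝ) ≤ 3)]
      norm_num
    rw [hφcDef]; linarith [h2 ▸ h1]
  have hφ1 : φc + ε ^ r ≤ 1 := by
    have : (3:ℝ) ^ (-r) ≤ 1 :=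
      Real.rpow_le_one_of_one_le_of_nonpos (by norm_num) (by linarith)
    rw [hφcDef]; linarith
  have hφε : 0 < φc * ε ^ d := by positivity
  set Vφ := Vd * (φc * ε ^ d) with hVφDef
  have hVφ : 0 < Vφ := by positivity
  set I1 := ∫⁻ x, ENNReal.ofReal (g x) ^ (-(s / ((d:ℝ) + r - s))) ∂P with hI1def
  set I2 := ∫⁻ x, ENNReal.ofReal (g x) ^ (-(r / (d:ℝ))) ∂P with hI2def
  have hGm : Measurable (fun x : E => ENNReal.ofReal (g x)) := hgm.ennreal_ofReal
  have hGtop : ∀ y : E, ENNReal.ofReal (g y) ≠ ⊤ := fun y => ENNReal.ofReal_ne_top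
  have rpow_pos_all : ∀ (c : ℝ), c < 0 → ∀ x : E, 0 < ENNReal.ofReal (g x) ^ c := by
    intro c hc x
    rcases eq_or_lt_of_le (zero_le (a := ENNReal.ofReal (g x))) with h | h
    · rw [← h, ENNReal.zero_rpow_of_neg hc]; exact (by simp : (0:ℝ≥0∞) < ⊤)
    · exact ENNReal.rpow_pos h (hGtop x)
  have hexp1 : -(s / ((d:ℝ) + r - s)) < 0 := by rw [neg_lt, neg_zero]; positivity
  have hexp2 : -(r / (d:ℝ)) < 0 := by rw [neg_lt, neg_zero]; positivity
  have hI1pos : I1 ≠ 0 := by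
    rw [hI1def, ← pos_iff_ne_zero, lintegral_pos_iff_support (hGm.pow_const _)]
    have he : Function.support (fun x => ENNReal.ofReal (g x) ^ (-(s / ((d:ℝ) + r - s))))
        = Set.univ := by
      ext x; simp only [Function.mem_support, Set.mem_univ, iff_true]
      exact (rpow_pos_all _ hexp1 x).ne'
    rw [he]; simp
  have hI2pos : I2 ≠ 0 := by
    rw [hI2def, ← pos_iff_ne_zero, lintegral_pos_iff_support (hGm.pow_const _)]
    have he : Function.support (fun x => ENNReal.ofReal (g x) ^ (-(r / (d:ℝ))))
        = Set.univ := by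
      ext x; simp only [Function.mem_support, Set.mem_univ, iff_true]
      exact (rpow_pos_all _ hexp2 x).ne'
    rw [he]; simp
  have hKpos : 0 < (2 : ℝ) ^ (1 / (d : ℝ)) * (r / (d : ℝ)) ^ (r / ((d : ℝ) * ((d : ℝ) + r)))
      * Vd ^ (-(1 / (d : ℝ))) * (φc * ε ^ d) ^ (-(1 / (d : ℝ))) := by positivity
  have hn2 : (0:ℝ) < (n:ℝ) - 2 := by
    have : (3:ℝ) ≤ (n:ℝ) := by exact_mod_cast hn
    linarith
  have hρpos : 0 < ((n : ℝ) - 2) ^ (-(1 / (d : ℝ))) := by positivity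
  have hα : (0:ℝ) < ((d:ℝ) + r - s) / (s * ((d:ℝ) + r)) := by positivity
  have hβ : (0:ℝ) < 1 / ((d:ℝ) + r) := by positivity
  have hC0 : ENNReal.ofReal ((2 : ℝ) ^ (1 / (d : ℝ))
      * (r / (d : ℝ)) ^ (r / ((d : ℝ) * ((d : ℝ) + r)))
      * Vd ^ (-(1 / (d : ℝ))) * (φc * ε ^ d) ^ (-(1 / (d : ℝ)))) ≠ 0 :=
    (ENNReal.ofReal_pos.mpr hKpos).ne'
  have hρ0 : ENNReal.ofReal (((n : ℝ) - 2) ^ (-(1 / (d : ℝ)))) ≠ 0 :=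
    (ENNReal.ofReal_pos.mpr hρpos).ne'
  have hI1p0 : I1 ^ (((d:ℝ) + r - s) / (s * ((d:ℝ) + r))) ≠ 0 := by
    intro h
    rcases ENNReal.rpow_eq_zero_iff.mp h with ⟨h1, _⟩ | ⟨_, h2⟩
    · exact hI1pos h1
    · exact absurd h2 (not_lt.mpr hα.le)
  have hI2p0 : I2 ^ (1 / ((d:ℝ) + r)) ≠ 0 := by
    intro h
    rcases ENNReal.rpow_eq_zero_iff.mp h with ⟨h1, _⟩ | ⟨_, h2⟩
    · exact hI2pos h1
    · exact absurd h2 (not_lt.mpr hβ.le)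
  by_cases hI1top : I1 = ⊤
  · refine le_top.trans (le_of_eq (prod4_top _ _ _ _ ?_ hC0 hI1p0 hI2p0 hρ0).symm)
    left
    rw [hI1top]
    exact ENNReal.top_rpow_of_pos hα
  by_cases hI2top : I2 = ⊤
  · refine le_top.trans (le_of_eq (prod4_top _ _ _ _ ?_ hC0 hI1p0 hI2p0 hρ0).symm)
    right
    rw [hI2top]
    exact ENNReal.top_rpow_of_pos hβ
  -- main case
  have ha1 : ∀ k : ℕ, 1 ≤ k → a 1 ∈ aSet a k :=
    fun k hk => ⟨1, Set.mem_Icc.mpr ⟨le_refl 1, hk⟩, rfl⟩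
  have hne : ∀ k : ℕ, 1 ≤ k → (aSet a k).Nonempty := fun k hk => ⟨a 1, ha1 k hk⟩
  have hgpos : ∀ᵐ x ∂P, ENNReal.ofReal (g x) ≠ 0 := by
    have hA : MeasurableSet {x : E | g x ≤ 0} := measurableSet_le hgm measurable_const
    have hle : ∫⁻ x, ({x : E | g x ≤ 0}).indicator (fun _ => (⊤:ℝ≥0∞)) x ∂P ≤ I2 := by
      rw [hI2def]; apply lintegral_mono; intro x
      by_cases hx : x ∈ {x : E | g x ≤ 0}
      · rw [Set.indicator_of_mem hx]
        show (⊤:ℝ≥0∞) ≤ ENNReal.ofReal (g x) ^ (-(r / (d:ℝ)))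
        have h0 : ENNReal.ofReal (g x) = 0 := ENNReal.ofReal_eq_zero.mpr hx
        rw [h0, ENNReal.zero_rpow_of_neg hexp2]
      · rw [Set.indicator_of_notMem hx]; exact zero_le
    rw [lintegral_indicator_const hA] at hle
    have hP0 : P {x : E | g x ≤ 0} = 0 := by
      by_contra hP
      rw [ENNReal.top_mul hP] at hle
      exact hI2top (top_le_iff.mp hle)
    rw [ae_iff]
    convert hP0 using 2
    ext x
    simp [ENNReal.ofReal_eq_zero]
  set D : ℕ → ℝ≥0∞ :=
    fun k => ∫⁻ y, ENNReal.ofReal (infDist y (aSet a k)) ^ r ∂P with hDdef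
  set Θ : ℕ → ℝ≥0∞ :=
    fun k => ∫⁻ y, ENNReal.ofReal (g y)
      * ENNReal.ofReal (infDist y (aSet a k)) ^ ((d:ℝ) + r) ∂P with hTdef
  have hΔm : ∀ k : ℕ, Measurable fun y : E => ENNReal.ofReal (infDist y (aSet a k)) :=
    fun k => (continuous_infDist_pt _).measurable.ennreal_ofReal
  have hDfin : ∀ k, 1 ≤ k → D k ≠ ⊤ := fun k hk =>
    ((infDist_lint_le P hr (ha1 k hk)).trans_lt (mom_fin P hr hmom (a 1))).ne
  have hVφ0' : ENNReal.ofReal Vφ ≠ 0 := (ENNReal.ofReal_pos.mpr hVφ).ne'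
  have KEY : ∀ k, 1 ≤ k → D (k+1) + ENNReal.ofReal Vφ * Θ k ≤ D k := by
    intro k hk
    have h := key_step (Γ := aSet a k) (Γ' := aSet a (k+1)) P ν d hr hφc.le hφ1 hε0
      hVd.le hgm hg0 (hne k hk) ?_ ?_
    · rw [hVφDef]
      exact h
    · filter_upwards [msupport_ae P] with y hy
      have hd1 : infDist y (aSet a k) ≤ ‖y - a 1‖ := by
        rw [← dist_eq_norm]
        exact infDist_le_dist_of_mem (ha1 k hk)
      exact hctrl y hy _ ⟨mul_nonneg hε0.le infDist_nonneg,
        mul_le_mul_of_nonneg_left hd1 hε0.le⟩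
    · intro ξ
      exact qerr_to_lintegral P hr hmom (ha1 (k+1) (by omega))
        (Set.mem_insert_of_mem ξ (ha1 k hk)) (ha k ξ)
  have hΘfin : ∀ k, 1 ≤ k → Θ k ≠ ⊤ := by
    intro k hk h
    have h1 := KEY k hk
    rw [h, ENNReal.mul_top hVφ0', add_top] at h1
    exact hDfin k hk (top_le_iff.mp h1)
  have H1 : ∀ k : ℕ, D k ≤ Θ k ^ (r / ((d:ℝ) + r)) * I2 ^ ((d:ℝ) / ((d:ℝ) + r)) := by
    intro k
    have h := holder_aux P (fun x => ENNReal.ofReal (g x))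
      (fun y => ENNReal.ofReal (infDist y (aSet a k))) hGm (hΔm k) hgpos hGtop hr hd0
    simp only [show r + (d:ℝ) = (d:ℝ) + r from add_comm r _] at h
    exact h
  have H2 : (∫⁻ y, ENNReal.ofReal (infDist y (aSet a n)) ^ s ∂P)
      ≤ Θ n ^ (s / ((d:ℝ) + r)) * I1 ^ (((d:ℝ) + r - s) / ((d:ℝ) + r)) := by
    have h := holder_aux P (fun x => ENNReal.ofReal (g x))
      (fun y => ENNReal.ofReal (infDist y (aSet a n))) hGm (hΔm n) hgpos hGtop hs0 hds
    simp only [show s + ((d:ℝ) + r - s) = (d:ℝ) + r by ring] at h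
    exact h
  -- real sequences
  set u : ℕ → ℝ := fun k => (D k).toReal with hudef
  set tr : ℕ → ℝ := fun k => (Θ k).toReal with htrdef
  set i2 : ℝ := I2.toReal with hi2def
  have hi2pos : 0 < i2 := ENNReal.toReal_pos hI2pos hI2top
  set Creal := Vφ * i2 ^ (-((d:ℝ) / r)) with hCdef
  have hCreal : 0 < Creal := by positivity
  have hu_nonneg : ∀ k, 0 ≤ u k := fun k => ENNReal.toReal_nonneg
  have htr_nonneg : ∀ k, 0 ≤ tr k := fun k => ENNReal.toReal_nonneg
  have hukey : ∀ k, 1 ≤ k → u (k+1) + Vφ * tr k ≤ u k := by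
    intro k hk
    have h := ENNReal.toReal_mono (hDfin k hk) (KEY k hk)
    rwa [ENNReal.toReal_add (hDfin (k+1) (by omega))
      (ENNReal.mul_ne_top ENNReal.ofReal_ne_top (hΘfin k hk)),
      ENNReal.toReal_mul, ENNReal.toReal_ofReal hVφ.le] at h
  have hH1r : ∀ k, 1 ≤ k → u k ≤ tr k ^ (r / ((d:ℝ)+r)) * i2 ^ ((d:ℝ)/((d:ℝ)+r)) := by
    intro k hk
    have hfin : Θ k ^ (r / ((d:ℝ)+r)) * I2 ^ ((d:ℝ)/((d:ℝ)+r)) ≠ ⊤ :=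
      ENNReal.mul_ne_top (ENNReal.rpow_ne_top_of_nonneg (by positivity) (hΘfin k hk))
        (ENNReal.rpow_ne_top_of_nonneg (by positivity) hI2top)
    have h := ENNReal.toReal_mono hfin (H1 k)
    rwa [ENNReal.toReal_mul, ← ENNReal.toReal_rpow, ← ENNReal.toReal_rpow] at h
  have htr_ge : ∀ k, 1 ≤ k → u k ^ (1 + (d:ℝ)/r) * i2 ^ (-((d:ℝ)/r)) ≤ tr k := by
    intro k hk
    have h2 : u k ^ (((d:ℝ)+r)/r) ≤ tr k * i2 ^ ((d:ℝ)/r) := by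
      have h3 := Real.rpow_le_rpow (hu_nonneg k) (hH1r k hk)
        (by positivity : (0:ℝ) ≤ ((d:ℝ)+r)/r)
      rwa [Real.mul_rpow (Real.rpow_nonneg (htr_nonneg k) _)
          (Real.rpow_nonneg hi2pos.le _),
        ← Real.rpow_mul (htr_nonneg k), ← Real.rpow_mul hi2pos.le,
        div_mul_div_comm, mul_comm r ((d:ℝ)+r), div_self (by positivity : ((d:ℝ)+r)*r ≠ 0),
        Real.rpow_one,
        show (d:ℝ)/((d:ℝ)+r) * (((d:ℝ)+r)/r) = (d:ℝ)/r by
          field_simp] at h3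
    calc u k ^ (1 + (d:ℝ)/r) * i2 ^ (-((d:ℝ)/r))
        = u k ^ (((d:ℝ)+r)/r) * i2 ^ (-((d:ℝ)/r)) := by
          rw [show 1 + (d:ℝ)/r = ((d:ℝ)+r)/r by field_simp; ring]
      _ ≤ (tr k * i2 ^ ((d:ℝ)/r)) * i2 ^ (-((d:ℝ)/r)) :=
          mul_le_mul_of_nonneg_right h2 (Real.rpow_nonneg hi2pos.le _)
      _ = tr k := by
          rw [mul_assoc, ← Real.rpow_add hi2pos]
          simp
  have hrec : ∀ k, 1 ≤ k → u (k+1) ≤ u k - Creal * u k ^ (1 + (d:ℝ)/r) := by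
    intro k hk
    have h1 := hukey k hk
    have h2 := htr_ge k hk
    have h3 : Creal * u k ^ (1 + (d:ℝ)/r) ≤ Vφ * tr k := by
      rw [hCdef]
      calc Vφ * i2 ^ (-((d:ℝ)/r)) * u k ^ (1 + (d:ℝ)/r)
          = Vφ * (u k ^ (1 + (d:ℝ)/r) * i2 ^ (-((d:ℝ)/r))) := by ring
        _ ≤ Vφ * tr k := mul_le_mul_of_nonneg_left h2 hVφ.le
    linarith
  have hum : ∀ m', 2 ≤ m' → u m' ^ ((d:ℝ)/r) ≤ ((d:ℝ)/r * Creal * ((m':ℝ)-1))⁻¹ :=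
    rec_aux (by positivity) hCreal u hu_nonneg hrec
  -- telescoping
  set m := (n+1)/2 with hmdef
  have hm2 : 2 ≤ m := by omega
  have hmn : m ≤ n := by omega
  have hΘanti : ∀ j, 1 ≤ j → j ≤ n → Θ n ≤ Θ j := by
    intro j hj hjn
    apply lintegral_mono
    intro y
    have hsub : aSet a j ⊆ aSet a n := Set.image_mono (Set.Icc_subset_Icc_right hjn)
    have : infDist y (aSet a n) ≤ infDist y (aSet a j) :=
      infDist_le_infDist_of_subset hsub (hne j hj)
    exact mul_le_mul_right (ENNReal.rpow_le_rpow (ENNReal.ofReal_le_ofReal this)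
      (by positivity)) _
  have htr_anti : ∀ j, 1 ≤ j → j ≤ n → tr n ≤ tr j := fun j hj hjn =>
    ENNReal.toReal_mono (hΘfin j hj) (hΘanti j hj hjn)
  have htel : ∀ j, m ≤ j → j ≤ n + 1 → u j + ((j:ℝ) - (m:ℝ)) * (Vφ * tr n) ≤ u m := by
    intro j hj
    induction j, hj using Nat.le_induction with
    | base => intro _; simp
    | succ j hj ih =>
      intro hj1
      have hjn : j ≤ n := by omega
      have h1 := hukey j (by omega)
      have h2 : tr n ≤ tr j := htr_anti j (by omega) hjn
      have h3 := ih (by omega)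
      have h4 : 0 ≤ tr n := htr_nonneg n
      push_cast
      push_cast at h3
      nlinarith [hVφ]
  have hteln := htel (n+1) (by omega) (le_refl _)
  -- bound on u m
  have hM1pos : (0:ℝ) < (m:ℝ) - 1 := by
    have : (2:ℝ) ≤ (m:ℝ) := by exact_mod_cast hm2
    linarith
  have hBpos : (0:ℝ) < (d:ℝ)/r * Creal * ((m:ℝ)-1) := by positivity
  have humm : u m ≤ ((d:ℝ)/r * Creal * ((m:ℝ)-1)) ^ (-(r/(d:ℝ))) := by
    have h := hum m hm2
    have h2 := Real.rpow_le_rpow (Real.rpow_nonneg (hu_nonneg m) _) h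
      (by positivity : (0:ℝ) ≤ r/(d:ℝ))
    rwa [← Real.rpow_mul (hu_nonneg m), div_mul_div_comm, mul_comm (d:ℝ) r,
      div_self (by positivity : r*(d:ℝ) ≠ 0), Real.rpow_one,
      Real.inv_rpow hBpos.le, ← Real.rpow_neg hBpos.le] at h2
  -- bound on tr n
  have hN1pos : (0:ℝ) < (n:ℝ) + 1 - (m:ℝ) := by
    have h1 : (m:ℝ) ≤ (n:ℝ) := by exact_mod_cast hmn
    linarith
  have htrb : tr n ≤ ((d:ℝ)/r * Creal * ((m:ℝ)-1)) ^ (-(r/(d:ℝ)))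
      * (((n:ℝ)+1-(m:ℝ)) * Vφ)⁻¹ := by
    push_cast at hteln
    have h1 : tr n * (((n:ℝ)+1-(m:ℝ)) * Vφ) ≤ u m := by
      have e : tr n * (((n:ℝ)+1-(m:ℝ)) * Vφ) = ((n:ℝ)+1-(m:ℝ)) * (Vφ * tr n) := by ring
      rw [e]
      linarith [hu_nonneg (n+1)]
    have h2 : tr n ≤ u m * (((n:ℝ)+1-(m:ℝ)) * Vφ)⁻¹ := by
      rw [← le_div_iff₀ (by positivity)] at h1
      rwa [div_eq_mul_inv] at h1
    exact h2.trans (mul_le_mul_of_nonneg_right humm (by positivity))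
  -- key combinatorial inequality
  have key_ineq : ((m:ℝ)-1) ^ (-(r/(d:ℝ))) * ((n:ℝ)+1-(m:ℝ))⁻¹
      ≤ (2:ℝ) ^ (((d:ℝ)+r)/(d:ℝ)) * ((n:ℝ)-2) ^ (-(((d:ℝ)+r)/(d:ℝ))) := by
    have hw : (0:ℝ) < ((n:ℝ)-2)/2 := by linarith
    have hnat1 : n ≤ 2*m := by omega
    have hwM1 : ((n:ℝ)-2)/2 ≤ (m:ℝ) - 1 := by
      have : (n:ℝ) ≤ 2*(m:ℝ) := by exact_mod_cast hnat1
      linarith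
    have hnat2 : 2*m ≤ n+1 := by omega
    have hwN1 : ((n:ℝ)-2)/2 ≤ (n:ℝ)+1-(m:ℝ) := by
      have : 2*(m:ℝ) ≤ (n:ℝ)+1 := by exact_mod_cast hnat2
      linarith
    have eRHS : (2:ℝ) ^ (((d:ℝ)+r)/(d:ℝ)) * ((n:ℝ)-2) ^ (-(((d:ℝ)+r)/(d:ℝ)))
        = (((n:ℝ)-2)/2) ^ (-(((d:ℝ)+r)/(d:ℝ))) := by
      rw [show (n:ℝ)-2 = 2 * (((n:ℝ)-2)/2) by ring,
        Real.mul_rpow (by norm_num) hw.le, ← mul_assoc,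
        ← Real.rpow_add (by norm_num : (0:ℝ) < 2)]
      rw [add_neg_cancel, Real.rpow_zero, one_mul]
      rw [show 2 * (((n:ℝ)-2)/2) = (n:ℝ)-2 by ring]
    rw [eRHS]
    have f1 : ((m:ℝ)-1) ^ (-(r/(d:ℝ))) ≤ (((n:ℝ)-2)/2) ^ (-(r/(d:ℝ))) :=
      Real.rpow_le_rpow_of_nonpos hw hwM1 (by simp; positivity)
    have f2 : ((n:ℝ)+1-(m:ℝ))⁻¹ ≤ (((n:ℝ)-2)/2)⁻¹ := inv_anti₀ hw hwN1
    calc ((m:ℝ)-1) ^ (-(r/(d:ℝ))) * ((n:ℝ)+1-(m:ℝ))⁻¹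
        ≤ (((n:ℝ)-2)/2) ^ (-(r/(d:ℝ))) * (((n:ℝ)-2)/2)⁻¹ :=
          mul_le_mul f1 f2 (by positivity) (by positivity)
      _ = (((n:ℝ)-2)/2) ^ (-(((d:ℝ)+r)/(d:ℝ))) := by
          rw [show ((((n:ℝ)-2)/2)⁻¹) = (((n:ℝ)-2)/2) ^ (-(1:ℝ)) by
            rw [Real.rpow_neg_one], ← Real.rpow_add hw]
          congr 1
          field_simp
          ring
  -- expansion of B ^ (-(r/d))
  have eB : ((d:ℝ)/r * Creal * ((m:ℝ)-1)) ^ (-(r/(d:ℝ)))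
      = (r/(d:ℝ)) ^ (r/(d:ℝ)) * (Vφ ^ (-(r/(d:ℝ))) * i2) * ((m:ℝ)-1) ^ (-(r/(d:ℝ))) := by
    rw [Real.mul_rpow (by positivity) hM1pos.le,
      Real.mul_rpow (by positivity) hCreal.le, hCdef,
      Real.mul_rpow hVφ.le (by positivity),
      ← Real.rpow_mul hi2pos.le,
      show (-((d:ℝ)/r)) * (-(r/(d:ℝ))) = 1 by
        rw [neg_mul_neg, div_mul_div_comm, mul_comm]
        exact div_self (by positivity),
      Real.rpow_one,
      show (d:ℝ)/r = (r/(d:ℝ))⁻¹ by rw [inv_div],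
      Real.inv_rpow (by positivity), ← Real.rpow_neg (by positivity), neg_neg]
  have eVφ : Vφ ^ (-(r/(d:ℝ))) * Vφ⁻¹ = Vφ ^ (-(((d:ℝ)+r)/(d:ℝ))) := by
    rw [show (Vφ⁻¹) = Vφ ^ (-(1:ℝ)) by rw [Real.rpow_neg_one], ← Real.rpow_add hVφ]
    congr 1
    field_simp
    ring
  -- real-side final bound
  set K : ℝ := (2 : ℝ) ^ (1 / (d : ℝ)) * (r / (d : ℝ)) ^ (r / ((d : ℝ) * ((d : ℝ) + r)))
      * Vd ^ (-(1 / (d : ℝ))) * (φc * ε ^ d) ^ (-(1 / (d : ℝ))) with hKdef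
  set ρ : ℝ := ((n : ℝ) - 2) ^ (-(1 / (d : ℝ))) with hρdef
  have hK2 : K = (2 : ℝ) ^ (1 / (d : ℝ)) * (r / (d : ℝ)) ^ (r / ((d : ℝ) * ((d : ℝ) + r)))
      * Vφ ^ (-(1 / (d : ℝ))) := by
    rw [hKdef, hVφDef, Real.mul_rpow hVd.le hφε.le]
    ring
  have hX0 : 0 ≤ K * i2 ^ (1/((d:ℝ)+r)) * ρ := by
    rw [hKdef, hρdef]; positivity
  have eX : (K * i2 ^ (1/((d:ℝ)+r)) * ρ) ^ ((d:ℝ)+r)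
      = ((2:ℝ) ^ (((d:ℝ)+r)/(d:ℝ)) * ((n:ℝ)-2) ^ (-(((d:ℝ)+r)/(d:ℝ))))
        * ((r/(d:ℝ)) ^ (r/(d:ℝ)) * (Vφ ^ (-(((d:ℝ)+r)/(d:ℝ))) * i2)) := by
    rw [hK2, hρdef]
    rw [Real.mul_rpow (by positivity) (by positivity),
      Real.mul_rpow (by positivity) (by positivity),
      Real.mul_rpow (by positivity) (by positivity),
      Real.mul_rpow (by positivity) (by positivity),
      ← Real.rpow_mul (by norm_num : (0:ℝ) ≤ 2),
      ← Real.rpow_mul (by positivity : (0:ℝ) ≤ r/(d:ℝ)),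
      ← Real.rpow_mul hVφ.le,
      ← Real.rpow_mul hi2pos.le,
      ← Real.rpow_mul (by linarith : (0:ℝ) ≤ (n:ℝ)-2)]
    rw [show 1/(d:ℝ) * ((d:ℝ)+r) = ((d:ℝ)+r)/(d:ℝ) by ring,
      show r/((d:ℝ)*((d:ℝ)+r)) * ((d:ℝ)+r) = r/(d:ℝ) by
        field_simp,
      show -(1/(d:ℝ)) * ((d:ℝ)+r) = -(((d:ℝ)+r)/(d:ℝ)) by ring,
      show 1/((d:ℝ)+r) * ((d:ℝ)+r) = 1 by field_simp,
      Real.rpow_one]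
    ring
  have RKEY : tr n ^ (1/((d:ℝ)+r)) ≤ K * i2 ^ (1/((d:ℝ)+r)) * ρ := by
    have hτX : tr n ≤ (K * i2 ^ (1/((d:ℝ)+r)) * ρ) ^ ((d:ℝ)+r) := by
      refine htrb.trans ?_
      rw [eX, eB, mul_inv]
      calc (r/(d:ℝ)) ^ (r/(d:ℝ)) * (Vφ ^ (-(r/(d:ℝ))) * i2) * ((m:ℝ)-1) ^ (-(r/(d:ℝ)))
            * (((n:ℝ)+1-(m:ℝ))⁻¹ * Vφ⁻¹)
          = (((m:ℝ)-1) ^ (-(r/(d:ℝ))) * ((n:ℝ)+1-(m:ℝ))⁻¹)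
            * ((r/(d:ℝ)) ^ (r/(d:ℝ)) * ((Vφ ^ (-(r/(d:ℝ))) * Vφ⁻¹) * i2)) := by ring
        _ ≤ ((2:ℝ) ^ (((d:ℝ)+r)/(d:ℝ)) * ((n:ℝ)-2) ^ (-(((d:ℝ)+r)/(d:ℝ))))
            * ((r/(d:ℝ)) ^ (r/(d:ℝ)) * ((Vφ ^ (-(r/(d:ℝ))) * Vφ⁻¹) * i2)) := by
            apply mul_le_mul_of_nonneg_right key_ineq
            have h1 : (0:ℝ) ≤ Vφ ^ (-(r/(d:ℝ))) := Real.rpow_nonneg hVφ.le _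
            positivity
        _ = ((2:ℝ) ^ (((d:ℝ)+r)/(d:ℝ)) * ((n:ℝ)-2) ^ (-(((d:ℝ)+r)/(d:ℝ))))
            * ((r/(d:ℝ)) ^ (r/(d:ℝ)) * (Vφ ^ (-(((d:ℝ)+r)/(d:ℝ))) * i2)) := by
            rw [eVφ]
    have h2 := Real.rpow_le_rpow (htr_nonneg n) hτX
      (by positivity : (0:ℝ) ≤ 1/((d:ℝ)+r))
    rwa [← Real.rpow_mul hX0,
      show ((d:ℝ)+r) * (1/((d:ℝ)+r)) = 1 by field_simp,
      Real.rpow_one] at h2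
  -- final ENNReal chain
  have c1 : ENNReal.ofReal (qerr s P (aSet a n))
      ≤ (∫⁻ y, ENNReal.ofReal (infDist y (aSet a n)) ^ s ∂P) ^ (1/s) := by
    show ENNReal.ofReal ((∫ x, infDist x (aSet a n) ^ s ∂P) ^ (1/s)) ≤ _
    have hX0' : 0 ≤ ∫ x, infDist x (aSet a n) ^ s ∂P :=
      integral_nonneg fun x => Real.rpow_nonneg infDist_nonneg s
    rw [← ENNReal.ofReal_rpow_of_nonneg hX0' (by positivity : (0:ℝ) ≤ 1/s)]
    apply ENNReal.rpow_le_rpow _ (by positivity : (0:ℝ) ≤ 1/s)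
    refine (ofReal_integral_le' P _ (fun y => Real.rpow_nonneg infDist_nonneg s)).trans
      (le_of_eq ?_)
    apply lintegral_congr
    intro y
    exact (ENNReal.ofReal_rpow_of_nonneg infDist_nonneg hs0.le).symm
  have c2 : (∫⁻ y, ENNReal.ofReal (infDist y (aSet a n)) ^ s ∂P) ^ (1/s)
      ≤ Θ n ^ (1/((d:ℝ)+r)) * I1 ^ (((d:ℝ)+r-s)/(s*((d:ℝ)+r))) := by
    have h := ENNReal.rpow_le_rpow H2 (by positivity : (0:ℝ) ≤ 1/s)
    rwa [ENNReal.mul_rpow_of_nonneg _ _ (by positivity : (0:ℝ) ≤ 1/s),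
      ← ENNReal.rpow_mul, ← ENNReal.rpow_mul,
      show s/((d:ℝ)+r) * (1/s) = 1/((d:ℝ)+r) by field_simp,
      show ((d:ℝ)+r-s)/((d:ℝ)+r) * (1/s) = ((d:ℝ)+r-s)/(s*((d:ℝ)+r)) by
        rw [div_mul_div_comm, mul_one, mul_comm ((d:ℝ)+r) s]
        ] at h
  have c3 : Θ n ^ (1/((d:ℝ)+r)) ≤ ENNReal.ofReal K * I2 ^ (1/((d:ℝ)+r))
      * ENNReal.ofReal ρ := by
    have e1 : Θ n = ENNReal.ofReal (tr n) := (ENNReal.ofReal_toReal (hΘfin n (by omega))).symm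
    have e2 : I2 ^ (1/((d:ℝ)+r)) = ENNReal.ofReal (i2 ^ (1/((d:ℝ)+r))) := by
      rw [hi2def, ← ENNReal.ofReal_rpow_of_nonneg ENNReal.toReal_nonneg
        (by positivity : (0:ℝ) ≤ 1/((d:ℝ)+r)), ENNReal.ofReal_toReal hI2top]
    rw [e1, e2, ENNReal.ofReal_rpow_of_nonneg (htr_nonneg n)
      (by positivity : (0:ℝ) ≤ 1/((d:ℝ)+r)),
      ← ENNReal.ofReal_mul (by rw [hKdef]; positivity),
      ← ENNReal.ofReal_mul (by rw [hKdef]; positivity)]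
    exact ENNReal.ofReal_le_ofReal RKEY
  calc ENNReal.ofReal (qerr s P (aSet a n))
      ≤ (∫⁻ y, ENNReal.ofReal (infDist y (aSet a n)) ^ s ∂P) ^ (1/s) := c1
    _ ≤ Θ n ^ (1/((d:ℝ)+r)) * I1 ^ (((d:ℝ)+r-s)/(s*((d:ℝ)+r))) := c2
    _ ≤ (ENNReal.ofReal K * I2 ^ (1/((d:ℝ)+r)) * ENNReal.ofReal ρ)
        * I1 ^ (((d:ℝ)+r-s)/(s*((d:ℝ)+r))) := mul_le_mul_left c3 _
    _ = ENNReal.ofReal K * I1 ^ (((d:ℝ)+r-s)/(s*((d:ℝ)+r))) * I2 ^ (1/((d:ℝ)+r))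
        * ENNReal.ofReal ρ := by ring
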